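/- Let w : ℝ → ℝ be a nonnegative, square-integrable, even function (w(−x) = w(x)) that is strictly decreasing on [0, ∞), and let s ∈ ℝ. Then the function t ↦ ∫_ℝ w(y − s) · w(−y + t − s) dy attains its value at t = 2s strictly above its value at any other point: for every t ≠ 2s, ∫_ℝ w(y − s) w(−y + t − s) dy < ∫_ℝ w(y − s) w(−y + 2s − s) dy. In particular, t = 2s is the unique maximizer of the reflected correlation function. -/

import Mathlib

open MeasureTheory

/-- The reflected correlation of the shifted symmetric unimodal profile `w(· − s)`
is uniquely maximized at `t = 2s`. -/
theorem reflected_correlation_unique_max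
    (w : ℝ → ℝ)
    (hw_nonneg : ∀ x, 0 ≤ w x)
    (hw_L2 : MemLp w 2 (volume : Measure ℝ))
    (hw_even : ∀ x, w (-x) = w x)
    (hw_anti : StrictAntiOn w (Set.Ici (0 : ℝ)))
    (s : ℝ) :
    ∀ t : ℝ, t ≠ 2 * s →
      (∫ y : ℝ, w (y - s) * w (-y + t - s)) <
        ∫ y : ℝ, w (y - s) * w (-y + 2 * s - s) := by
  intro t ht
  have habs : ∀ x : ℝ, w x = w |x| := by
    intro x
    rcases le_or_gt 0 x with h | h
    · rw [abs_of_nonneg h]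
    · rw [abs_of_neg h, ← hw_even x]
  -- rewrite RHS integrand
  have hRHS : (fun y : ℝ => w (y - s) * w (-y + 2 * s - s)) =
      fun y : ℝ => w (y - s) * w (y - s) := by
    funext y
    have : -y + 2 * s - s = -(y - s) := by ring
    rw [this, hw_even]
  rw [hRHS]
  set F : ℝ → ℝ := fun y => w (y - s) with hFdef
  set G : ℝ → ℝ := fun y => w (-y + t - s) with hGdef
  -- MemLp facts
  have hmpF : MeasurePreserving (fun y : ℝ => y - s) volume volume :=
    measurePreserving_sub_right volume s
  have hmpG : MeasurePreserving (fun y : ℝ => -y + t - s) volume volume := by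
    have h1 : MeasurePreserving (fun y : ℝ => -y) (volume : Measure ℝ) volume :=
      Measure.measurePreserving_neg volume
    have h2 : MeasurePreserving (fun y : ℝ => y + t - s) (volume : Measure ℝ) volume := by
      have := measurePreserving_add_right (volume : Measure ℝ) (t - s)
      convert this using 2 with y
      ring
    exact h2.comp h1
  have hF2 : MemLp F 2 volume := hw_L2.comp_measurePreserving hmpF
  have hG2 : MemLp G 2 volume := hw_L2.comp_measurePreserving hmpG
  -- integrability of products
  have hmul : ∀ (f g : ℝ → ℝ), MemLp f 2 volume → MemLp g 2 volume →
      Integrable (fun y => f y * g y) volume := by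
    intro f g hf hg
    have : MemLp (f • g) 1 volume := by
      apply hg.smul hf
    exact memLp_one_iff_integrable.mp this
  have hFG : Integrable (fun y => F y * G y) volume := hmul F G hF2 hG2
  have hFF : Integrable (fun y => F y * F y) volume := hmul F F hF2 hF2
  have hGG : Integrable (fun y => G y * G y) volume := hmul G G hG2 hG2
  -- equal L2 norms: ∫ F² = ∫ G²
  have hintF : (∫ y : ℝ, F y * F y) = ∫ y : ℝ, w y * w y := by
    simpa using integral_sub_right_eq_self (fun y : ℝ => w y * w y) s
  have hintG : (∫ y : ℝ, G y * G y) = ∫ y : ℝ, w y * w y := by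
    have h1 : (fun y : ℝ => G y * G y) =
        fun y : ℝ => (fun z : ℝ => w (-z) * w (-z)) (y - (t - s)) := by
      funext y
      simp only [hGdef]
      ring_nf
    rw [h1, integral_sub_right_eq_self (fun z : ℝ => w (-z) * w (-z)) (t - s)]
    simp_rw [hw_even]
  -- difference function
  have hDD : Integrable (fun y => (F y - G y) * (F y - G y)) volume :=
    hmul _ _ (hF2.sub hG2) (hF2.sub hG2)
  have hexpand : (∫ y : ℝ, (F y - G y) * (F y - G y)) =
      (∫ y : ℝ, F y * F y) + (∫ y : ℝ, G y * G y) - 2 * ∫ y : ℝ, F y * G y := by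
    have h1 : (fun y : ℝ => (F y - G y) * (F y - G y)) =
        fun y => (F y * F y + G y * G y) - (2 : ℝ) * (F y * G y) := by
      funext y; ring
    have hA : Integrable (fun y => F y * F y + G y * G y) volume := hFF.add hGG
    have hB : Integrable (fun y => (2 : ℝ) * (F y * G y)) volume := hFG.const_mul 2
    rw [h1, integral_sub hA hB, integral_add hFF hGG, integral_const_mul]
  -- positivity of ∫ (F - G)²
  have hpos : 0 < ∫ y : ℝ, (F y - G y) * (F y - G y) := by
    rcases (integral_nonneg (f := fun y => (F y - G y) * (F y - G y)) (fun y => mul_self_nonneg (F y - G y))).lt_or_eq with h | h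
    · exact h
    · exfalso
      have hz : (fun y => (F y - G y) * (F y - G y)) =ᵐ[volume] 0 := by
        rw [← integral_eq_zero_iff_of_nonneg (fun y => mul_self_nonneg (F y - G y)) hDD]
        exact h.symm
      have hFGae : ∀ᵐ y : ℝ ∂volume, F y = G y := by
        filter_upwards [hz] with y hy
        have : (F y - G y) * (F y - G y) = 0 := hy
        have := mul_self_eq_zero.mp this
        linarith
      -- but F y = G y only possible at y = t / 2
      have hsub : {y : ℝ | F y = G y} ⊆ {t / 2} := by
        intro y hy
        simp only [Set.mem_setOf_eq, hFdef, hGdef] at hy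
        rw [habs (y - s), habs (-y + t - s)] at hy
        have habseq : |y - s| = |-y + t - s| :=
          hw_anti.injOn (Set.mem_Ici.mpr (abs_nonneg _)) (Set.mem_Ici.mpr (abs_nonneg _)) hy
        rcases abs_eq_abs.mp habseq with h | h
        · have : y = t / 2 := by linarith
          simpa using this
        · exfalso; apply ht; linarith
      have hnull : volume {y : ℝ | F y = G y} = 0 :=
        measure_mono_null hsub (measure_singleton _)
      have : ∀ᵐ y : ℝ ∂volume, F y ≠ G y := by
        rw [ae_iff]
        simpa using hnull
      have : volume (Set.univ : Set ℝ) = 0 := by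
        have := (hFGae.and this).exists
        rcases this with ⟨y, h1, h2⟩
        exact absurd h1 h2
      simp at this
  -- conclude
  have key : 2 * (∫ y : ℝ, F y * F y) - 2 * (∫ y : ℝ, F y * G y) =
      ∫ y : ℝ, (F y - G y) * (F y - G y) := by
    rw [hexpand, hintF, hintG]; ring
  have : (∫ y : ℝ, F y * G y) < ∫ y : ℝ, F y * F y := by linarith
  simpa [hFdef, hGdef] using this
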